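/- Let n ≥ 1, let μ be a (non-negative) measure on the Borel sets of ℝ^n, let K = {k_0, …, k_ρ} ⊆ ℤ_+^n (with the k_j pairwise distinct), and let l ∈ {1,…,n}. Suppose that for all j, m ∈ {0,…,ρ} the monomials t ↦ t^{k_j + k_m} and t ↦ t^{k_j + k_m + 2 e_l} are μ-integrable, and set s_w = ∫ t^w dμ(t) for these exponents w. Let Ω_l = {j ∈ {0,…,ρ} : k_j + e_l ∈ K}, Γ_l = (s_{k_j + k_m})_{m,j ∈ Ω_l}, and Γ̂_l = (s_{k_j + k_m + 2 e_l})_{m,j ∈ Ω_l}. Then Ker Γ_l ⊆ Ker Γ̂_l, i.e. every complex vector α with Γ_l α = 0 satisfies Γ̂_l α = 0. -/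

import Mathlib

open MeasureTheory

private lemma integral_complex_ofReal' {X : Type*} [MeasurableSpace X] {μ : Measure X}
    (f : X → ℝ) : ∫ x, ((f x : ℝ) : ℂ) ∂μ = ((∫ x, f x ∂μ : ℝ) : ℂ) :=
  integral_ofReal

/-- The necessary condition `Ker Γ_l ⊆ Ker Γ̂_l` for the solvability of the truncated
multidimensional moment problem: with `Ω_l = {j : k_j + e_l ∈ K}`,
`Γ_l = (s_{k_j + k_m})_{m,j ∈ Ω_l}` and `Γ̂_l = (s_{k_j + k_m + 2e_l})_{m,j ∈ Ω_l}`,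
every vector annihilated by `Γ_l` is annihilated by `Γ̂_l`. -/
theorem moment_matrix_kernel_condition (n : ℕ) (hn : 1 ≤ n) (ρ : ℕ)
    (μ : Measure (Fin n → ℝ))
    (k : Fin (ρ + 1) → (Fin n → ℕ)) (hk : Function.Injective k)
    (l : Fin n)
    (hint : ∀ j m : Fin (ρ + 1),
      Integrable (fun t : Fin n → ℝ => ∏ i, t i ^ ((k j + k m) i)) μ)
    (hint' : ∀ j m : Fin (ρ + 1),
      Integrable (fun t : Fin n → ℝ =>
        ∏ i, t i ^ ((k j + k m + (Pi.single l 2 : Fin n → ℕ)) i)) μ)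
    (s : (Fin n → ℕ) → ℝ)
    (hs : ∀ j m : Fin (ρ + 1),
      s (k j + k m) = ∫ t : Fin n → ℝ, (∏ i, t i ^ ((k j + k m) i)) ∂μ)
    (hs' : ∀ j m : Fin (ρ + 1),
      s (k j + k m + (Pi.single l 2 : Fin n → ℕ)) =
        ∫ t : Fin n → ℝ, (∏ i, t i ^ ((k j + k m + (Pi.single l 2 : Fin n → ℕ)) i)) ∂μ) :
    ∀ α : {j : Fin (ρ + 1) // k j + Pi.single l 1 ∈ Set.range k} → ℂ,
      (Matrix.of fun m j : {j : Fin (ρ + 1) // k j + Pi.single l 1 ∈ Set.range k} =>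
        ((s (k j.val + k m.val) : ℝ) : ℂ)).mulVec α = 0 →
      (Matrix.of fun m j : {j : Fin (ρ + 1) // k j + Pi.single l 1 ∈ Set.range k} =>
        ((s (k j.val + k m.val + (Pi.single l 2 : Fin n → ℕ)) : ℝ) : ℂ)).mulVec α = 0 := by
  intro α hα
  -- splitting of monomials
  have key : ∀ (a b : Fin n → ℕ) (t : Fin n → ℝ),
      (∏ i, t i ^ ((a + b) i)) = (∏ i, t i ^ a i) * (∏ i, t i ^ b i) := by
    intro a b t
    simp [Pi.add_apply, pow_add, Finset.prod_mul_distrib]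
  have keyS : ∀ t : Fin n → ℝ, (∏ i, t i ^ ((Pi.single l 2 : Fin n → ℕ) i)) = t l ^ 2 := by
    intro t
    rw [Finset.prod_eq_single l]
    · simp
    · intro i _ hi; simp [Pi.single_eq_of_ne hi]
    · simp
  have key2 : ∀ (a b : Fin n → ℕ) (t : Fin n → ℝ),
      (∏ i, t i ^ ((a + b + (Pi.single l 2 : Fin n → ℕ)) i)) =
        ((∏ i, t i ^ b i) * t l ^ 2) * (∏ i, t i ^ a i) := by
    intro a b t
    rw [key (a + b) (Pi.single l 2) t, key a b t, keyS t]
    ring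
  -- the polynomial p
  set p : (Fin n → ℝ) → ℂ :=
    fun t => ∑ j : {j : Fin (ρ + 1) // k j + Pi.single l 1 ∈ Set.range k},
      α j * ((∏ i, t i ^ (k j.val i) : ℝ) : ℂ) with hpdef
  -- integrability of complex monomial products
  have hIc : ∀ j m : Fin (ρ + 1),
      Integrable (fun t : Fin n → ℝ =>
        (((∏ i, t i ^ (k j i)) * (∏ i, t i ^ (k m i)) : ℝ) : ℂ)) μ := by
    intro j m
    have h := (hint j m).ofReal (𝕜 := ℂ)
    refine h.congr (Filter.Eventually.of_forall fun t => ?_)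
    simp only [key]
    rfl
  have hIc' : ∀ j m : Fin (ρ + 1),
      Integrable (fun t : Fin n → ℝ =>
        ((((∏ i, t i ^ (k m i)) * t l ^ 2) * (∏ i, t i ^ (k j i)) : ℝ) : ℂ)) μ := by
    intro j m
    have h := (hint' j m).ofReal (𝕜 := ℂ)
    refine h.congr (Filter.Eventually.of_forall fun t => ?_)
    simp only [key2]
    rfl
  -- Step A : for each m ∈ Ω, ∫ t^{k_m} p = 0
  have stepA : ∀ m : {j : Fin (ρ + 1) // k j + Pi.single l 1 ∈ Set.range k},
      ∫ t : Fin n → ℝ, ((∏ i, t i ^ (k m.val i) : ℝ) : ℂ) * p t ∂μ = 0 := by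
    intro m
    have hαm := congrFun hα m
    simp only [Matrix.mulVec, dotProduct, Matrix.of_apply, Pi.zero_apply] at hαm
    have hswap : ∀ j : {j : Fin (ρ + 1) // k j + Pi.single l 1 ∈ Set.range k},
        ((s (k j.val + k m.val) : ℝ) : ℂ) =
        ∫ t : Fin n → ℝ,
          (((∏ i, t i ^ (k j.val i)) * (∏ i, t i ^ (k m.val i)) : ℝ) : ℂ) ∂μ := by
      intro j
      rw [hs j.val m.val, ← integral_complex_ofReal']
      exact integral_congr_ae (Filter.Eventually.of_forall fun t => by simp only [key])
    calc ∫ t : Fin n → ℝ, ((∏ i, t i ^ (k m.val i) : ℝ) : ℂ) * p t ∂μ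
        = ∫ t : Fin n → ℝ, ∑ j : {j : Fin (ρ + 1) // k j + Pi.single l 1 ∈ Set.range k},
            α j * (((∏ i, t i ^ (k j.val i)) * (∏ i, t i ^ (k m.val i)) : ℝ) : ℂ) ∂μ := by
          refine integral_congr_ae (Filter.Eventually.of_forall fun t => ?_)
          simp only [hpdef, Finset.mul_sum]
          refine Finset.sum_congr rfl fun j _ => ?_
          push_cast
          ring
      _ = ∑ j : {j : Fin (ρ + 1) // k j + Pi.single l 1 ∈ Set.range k}, ∫ t : Fin n → ℝ,
            α j * (((∏ i, t i ^ (k j.val i)) * (∏ i, t i ^ (k m.val i)) : ℝ) : ℂ) ∂μ :=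
          integral_finset_sum _ (fun j _ => (hIc j.val m.val).const_mul (α j))
      _ = ∑ j : {j : Fin (ρ + 1) // k j + Pi.single l 1 ∈ Set.range k},
            α j * ((s (k j.val + k m.val) : ℝ) : ℂ) := by
          refine Finset.sum_congr rfl fun j _ => ?_
          rw [integral_const_mul, hswap j]
      _ = 0 := by rw [← hαm]; exact Finset.sum_congr rfl fun j _ => mul_comm _ _
  -- integrability of t ↦ t^{k_m} * p t
  have hImp : ∀ m : {j : Fin (ρ + 1) // k j + Pi.single l 1 ∈ Set.range k},
      Integrable (fun t : Fin n → ℝ => ((∏ i, t i ^ (k m.val i) : ℝ) : ℂ) * p t) μ := by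
    intro m
    have : Integrable (fun t : Fin n → ℝ =>
        ∑ j : {j : Fin (ρ + 1) // k j + Pi.single l 1 ∈ Set.range k},
        α j * (((∏ i, t i ^ (k j.val i)) * (∏ i, t i ^ (k m.val i)) : ℝ) : ℂ)) μ :=
      integrable_finset_sum _ (fun j _ => (hIc j.val m.val).const_mul (α j))
    refine this.congr (Filter.Eventually.of_forall fun t => ?_)
    simp only [hpdef, Finset.mul_sum]
    refine (Finset.sum_congr rfl fun j _ => ?_).symm
    push_cast
    ring
  -- Step B : ∫ conj p * p = 0
  have stepB : ∫ t : Fin n → ℝ, (starRingEnd ℂ) (p t) * p t ∂μ = 0 := by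
    calc ∫ t : Fin n → ℝ, (starRingEnd ℂ) (p t) * p t ∂μ
        = ∫ t : Fin n → ℝ, ∑ m : {j : Fin (ρ + 1) // k j + Pi.single l 1 ∈ Set.range k},
            (starRingEnd ℂ) (α m) * (((∏ i, t i ^ (k m.val i) : ℝ) : ℂ) * p t) ∂μ := by
          refine integral_congr_ae (Filter.Eventually.of_forall fun t => ?_)
          simp only [hpdef]
          rw [map_sum, Finset.sum_mul]
          refine Finset.sum_congr rfl fun m _ => ?_
          rw [map_mul, Complex.conj_ofReal]
          ring
      _ = ∑ m : {j : Fin (ρ + 1) // k j + Pi.single l 1 ∈ Set.range k}, ∫ t : Fin n → ℝ,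
            (starRingEnd ℂ) (α m) * (((∏ i, t i ^ (k m.val i) : ℝ) : ℂ) * p t) ∂μ :=
          integral_finset_sum _ (fun m _ => (hImp m).const_mul _)
      _ = 0 := by
          refine Finset.sum_eq_zero fun m _ => ?_
          rw [integral_const_mul, stepA m, mul_zero]
  -- conj z * z = ‖z‖²
  have hconj : ∀ z : ℂ, (starRingEnd ℂ) z * z = ((‖z‖ ^ 2 : ℝ) : ℂ) := by
    intro z
    rw [mul_comm, Complex.mul_conj]
    norm_cast
    rw [Complex.normSq_eq_norm_sq]
  -- integrability of conj p * p and of ‖p‖²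
  have hI : Integrable (fun t : Fin n → ℝ => (starRingEnd ℂ) (p t) * p t) μ := by
    have : Integrable (fun t : Fin n → ℝ =>
        ∑ m : {j : Fin (ρ + 1) // k j + Pi.single l 1 ∈ Set.range k},
        (starRingEnd ℂ) (α m) * (((∏ i, t i ^ (k m.val i) : ℝ) : ℂ) * p t)) μ :=
      integrable_finset_sum _ (fun m _ => (hImp m).const_mul _)
    refine this.congr (Filter.Eventually.of_forall fun t => ?_)
    simp only [hpdef]
    rw [map_sum, Finset.sum_mul]
    refine (Finset.sum_congr rfl fun m _ => ?_).symm
    rw [map_mul, Complex.conj_ofReal]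
    ring
  have hInp : Integrable (fun t : Fin n → ℝ => ‖p t‖ ^ 2) μ := by
    refine hI.norm.congr (Filter.Eventually.of_forall fun t => ?_)
    simp only [hconj (p t), Complex.norm_real, Real.norm_eq_abs, abs_of_nonneg (by positivity :
      (0:ℝ) ≤ ‖p t‖ ^ 2)]
  -- p = 0 a.e.
  have hp0 : p =ᵐ[μ] 0 := by
    have h0 : ∫ t : Fin n → ℝ, ‖p t‖ ^ 2 ∂μ = 0 := by
      have h1 : ((∫ t : Fin n → ℝ, ‖p t‖ ^ 2 ∂μ : ℝ) : ℂ) = 0 := by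
        rw [← integral_complex_ofReal', ← stepB]
        exact integral_congr_ae (Filter.Eventually.of_forall fun t => (hconj (p t)).symm)
      exact_mod_cast h1
    have h2 := (integral_eq_zero_iff_of_nonneg
      (fun t => by positivity) hInp).mp h0
    filter_upwards [h2] with t ht
    have h3 : ‖p t‖ ^ 2 = 0 := ht
    have h4 : ‖p t‖ = 0 := by nlinarith [norm_nonneg (p t)]
    simpa using h4
  -- conclusion
  funext m
  simp only [Matrix.mulVec, dotProduct, Matrix.of_apply, Pi.zero_apply]
  have hswap' : ∀ j : {j : Fin (ρ + 1) // k j + Pi.single l 1 ∈ Set.range k},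
      ((s (k j.val + k m.val + (Pi.single l 2 : Fin n → ℕ)) : ℝ) : ℂ) =
      ∫ t : Fin n → ℝ,
        ((((∏ i, t i ^ (k m.val i)) * t l ^ 2) * (∏ i, t i ^ (k j.val i)) : ℝ) : ℂ) ∂μ := by
    intro j
    rw [hs' j.val m.val, ← integral_complex_ofReal']
    exact integral_congr_ae (Filter.Eventually.of_forall fun t => by simp only [key2])
  calc ∑ j : {j : Fin (ρ + 1) // k j + Pi.single l 1 ∈ Set.range k},
        ((s (k j.val + k m.val + (Pi.single l 2 : Fin n → ℕ)) : ℝ) : ℂ) * α j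
      = ∑ j : {j : Fin (ρ + 1) // k j + Pi.single l 1 ∈ Set.range k}, ∫ t : Fin n → ℝ,
          α j * ((((∏ i, t i ^ (k m.val i)) * t l ^ 2) * (∏ i, t i ^ (k j.val i)) : ℝ) : ℂ) ∂μ := by
        refine Finset.sum_congr rfl fun j _ => ?_
        rw [integral_const_mul, ← hswap' j, mul_comm]
    _ = ∫ t : Fin n → ℝ, ∑ j : {j : Fin (ρ + 1) // k j + Pi.single l 1 ∈ Set.range k},
          α j * ((((∏ i, t i ^ (k m.val i)) * t l ^ 2) * (∏ i, t i ^ (k j.val i)) : ℝ) : ℂ) ∂μ :=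
        (integral_finset_sum _ (fun j _ => (hIc' j.val m.val).const_mul (α j))).symm
    _ = ∫ t : Fin n → ℝ,
          ((((∏ i, t i ^ (k m.val i)) * t l ^ 2 : ℝ) : ℂ)) * p t ∂μ := by
        refine integral_congr_ae (Filter.Eventually.of_forall fun t => ?_)
        simp only [hpdef, Finset.mul_sum]
        refine Finset.sum_congr rfl fun j _ => ?_
        push_cast
        ring
    _ = 0 := by
        refine integral_eq_zero_of_ae ?_
        filter_upwards [hp0] with t ht
        simp [ht]
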